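/- Let Q be a finite acyclic quiver such that every vertex is incident to at least two arrows (condition (b)), and let d_a(x+rn) = dim Ext¹_{kQ}(τ^{-r}P(x), P(a)) where n = #Q₀. Then for any arrow γ: x → y in Q and any r ≥ 0, d_a(y+rn) ≤ d_a(x+rn) ≤ d_a(y+(r+1)n). -/
import Mathlib


/-! Combinatorics of quivers: walks in the double quiver, the function `l_Q`,
paths, acyclicity, condition (b), unique sources, and the set `L(Q)`.
A quiver on a vertex type `V` is encoded by its family of arrow types
`H : V → V → Type`. -/

/-- Walks in the double quiver `Q̃` of the quiver `Q` encoded by `H`: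
a step may traverse an arrow forwards (`fwd`) or backwards (`bwd`). -/
inductive DWalk {V : Type} (H : V → V → Type) : V → V → Type where
  | nil : (a : V) → DWalk H a a
  | fwd : {a b c : V} → DWalk H a b → H b c → DWalk H a c
  | bwd : {a b c : V} → DWalk H a b → H c b → DWalk H a c

/-- `c⁺(w)`: the number of forward (original) arrows used by a walk in `Q̃`. -/
def DWalk.cplus {V : Type} {H : V → V → Type} : {a b : V} → DWalk H a b → ℕ
  | _, _, .nil _ => 0
  | _, _, .fwd w _ => DWalk.cplus w + 1
  | _, _, .bwd w _ => DWalk.cplus w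

/-- `l_Q(i,j)`: the minimal number of forward arrows over all walks from `i`
to `j` in the double quiver `Q̃`.  (In particular `l_Q(i,i) = 0`.) -/
noncomputable def ell {V : Type} (H : V → V → Type) (i j : V) : ℕ :=
  sInf {m | ∃ w : DWalk H i j, DWalk.cplus w = m}

/-- Directed paths in the quiver `Q` itself. -/
inductive QPath {V : Type} (H : V → V → Type) : V → V → Type where
  | nil : (a : V) → QPath H a a
  | cons : {a b c : V} → QPath H a b → H b c → QPath H a c

def QPath.length {V : Type} {H : V → V → Type} : {a b : V} → QPath H a b → ℕ
  | _, _, .nil _ => 0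
  | _, _, .cons p _ => QPath.length p + 1

/-- `Q` has no loops and no (nontrivial, directed) cycles. -/
def QuiverAcyclic {V : Type} (H : V → V → Type) : Prop :=
  ∀ (a : V) (p : QPath H a a), QPath.length p = 0

/-- `Q` is connected (any two vertices are joined by a walk in `Q̃`). -/
def QuiverConnected {V : Type} (H : V → V → Type) : Prop :=
  ∀ a b : V, Nonempty (DWalk H a b)

/-- Condition (b): for every vertex `x`, `#s(x) + #t(x) > 1`. -/
def CondB {V : Type} (H : V → V → Type) [Fintype V] [∀ a b, Fintype (H a b)] : Prop :=
  ∀ x : V, 1 < ∑ y : V, (Fintype.card (H x y) + Fintype.card (H y x))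

/-- `s` is the unique source (vertex with no incoming arrows) of `Q`. -/
def UniqueSource {V : Type} (H : V → V → Type) (s : V) : Prop :=
  (∀ y : V, IsEmpty (H y s)) ∧ ∀ t : V, (∀ y : V, IsEmpty (H y t)) → t = s

/-- The set `L(Q) = {(r_i) ∈ ℤ_{≥0}^{Q₀} ∣ r_j ≤ r_i + l_Q(i,j) for all i,j}`. -/
def LSet {V : Type} (H : V → V → Type) : Set (V → ℕ) :=
  {r | ∀ i j : V, r j ≤ r i + ell H i j}


/-- Lemma 3.2 of the paper. Let `Q` be a finite connected
acyclic quiver with vertex set `{0, …, n-1}` (arrows going from larger to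
smaller indices) such that every vertex is incident to at least two arrows
(condition (b)).  Let `d_a(x + rn) = dim Ext¹(τ^{-r}P(x), P(a))`; under
condition (b) this sequence satisfies the recursion below (hypotheses
`h0`, `h1`, `h2`).  Then for any arrow `γ : x → y` of `Q` and any `r ≥ 0`,
`d_a(y + rn) ≤ d_a(x + rn) ≤ d_a(y + (r+1)n)`. -/
theorem d_monotone_along_arrows {n : ℕ} (hn : 0 < n)
    (H : Fin n → Fin n → Type) [∀ a b, Fintype (H a b)]
    (hdir : ∀ (a b : Fin n), H a b → (b : ℕ) < (a : ℕ))
    (hb : CondB H)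
    (a : Fin n) (d : ℕ → ℤ)
    (h0 : ∀ (x : Fin n) (r : ℕ), (x : ℕ) + r * n < (a : ℕ) + n →
      d ((x : ℕ) + r * n) = 0)
    (h1 : d ((a : ℕ) + n) = 1)
    (h2 : ∀ (x : Fin n) (r : ℕ), (a : ℕ) + n < (x : ℕ) + (r + 1) * n →
      d ((x : ℕ) + (r + 1) * n) =
        (∑ y : Fin n, (Fintype.card (H x y) : ℤ) * d ((y : ℕ) + (r + 1) * n)) +
        (∑ y : Fin n, (Fintype.card (H y x) : ℤ) * d ((y : ℕ) + r * n)) -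
        d ((x : ℕ) + r * n))
    {x y : Fin n} (γ : H x y) (r : ℕ) :
    d ((y : ℕ) + r * n) ≤ d ((x : ℕ) + r * n) ∧
    d ((x : ℕ) + r * n) ≤ d ((y : ℕ) + (r + 1) * n) := by
  have key : ∀ m : ℕ, ∀ (x : Fin n) (r : ℕ), (x : ℕ) + r * n = m →
      0 ≤ d m ∧
      (∀ y : Fin n, H x y → d ((y : ℕ) + r * n) ≤ d m) ∧
      (∀ r' : ℕ, r = r' + 1 → ∀ w : Fin n, H w x → d ((w : ℕ) + r' * n) ≤ d m) := by
    intro m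
    induction m using Nat.strong_induction_on with
    | _ m IH =>
      intro x r hxr
      subst hxr
      rcases lt_trichotomy ((x : ℕ) + r * n) ((a : ℕ) + n) with hlt | heq | hgt
      · -- small case : value is 0
        have hd0 : d ((x : ℕ) + r * n) = 0 := h0 x r hlt
        refine ⟨by rw [hd0], ?_, ?_⟩
        · intro z hz
          have hz' : (z : ℕ) + r * n < (a : ℕ) + n := by
            have := hdir x z hz; omega
          rw [h0 z r hz', hd0]
        · intro r' hr' w _
          subst hr'
          have hsucc : (r' + 1) * n = r' * n + n := by ring
          have hw' : (w : ℕ) + r' * n < (a : ℕ) + n := by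
            have hwn := w.isLt
            have hxn := x.isLt
            omega
          rw [h0 w r' hw', hd0]
      · -- value is 1
        rw [heq, h1]
        refine ⟨by norm_num, ?_, ?_⟩
        · intro z hz
          have hz' : (z : ℕ) + r * n < (a : ℕ) + n := by
            have := hdir x z hz; omega
          rw [h0 z r hz']; norm_num
        · intro r' hr' w _
          subst hr'
          have hsucc : (r' + 1) * n = r' * n + n := by ring
          have hw' : (w : ℕ) + r' * n < (a : ℕ) + n := by
            have hwn := w.isLt
            have hxn := x.isLt
            omega
          rw [h0 w r' hw']; norm_num
      · -- recursion case
        have hxn := x.isLt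
        have hr0 : r ≠ 0 := by
          rintro rfl
          have hax := a.isLt
          omega
        obtain ⟨r', rfl⟩ : ∃ r', r = r' + 1 := ⟨r - 1, by omega⟩
        have hsucc : (r' + 1) * n = r' * n + n := by ring
        have hrec := h2 x r' hgt
        set D := d ((x : ℕ) + r' * n) with hDdef
        have hxlt : (x : ℕ) + r' * n < (x : ℕ) + (r' + 1) * n := by omega
        have hD0 : 0 ≤ D := (IH _ hxlt x r' rfl).1
        have hE : ∀ z : Fin n, H x z → D ≤ d ((z : ℕ) + (r' + 1) * n) := by
          intro z hz
          have hzx := hdir x z hz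
          have hzlt : (z : ℕ) + (r' + 1) * n < (x : ℕ) + (r' + 1) * n := by omega
          exact (IH _ hzlt z (r' + 1) rfl).2.2 r' rfl x hz
        have hF : ∀ w : Fin n, H w x → D ≤ d ((w : ℕ) + r' * n) := by
          intro w hw
          have hwn := w.isLt
          have hwlt : (w : ℕ) + r' * n < (x : ℕ) + (r' + 1) * n := by omega
          exact (IH _ hwlt w r' rfl).2.1 x hw
        set g : Fin n → ℤ :=
          fun z => (Fintype.card (H x z) : ℤ) * (d ((z : ℕ) + (r' + 1) * n) - D) with hgdef
        set g' : Fin n → ℤ :=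
          fun w => (Fintype.card (H w x) : ℤ) * (d ((w : ℕ) + r' * n) - D) with hg'def
        have hg : ∀ z : Fin n, 0 ≤ g z := by
          intro z
          rcases isEmpty_or_nonempty (H x z) with he | hne
          · simp [hgdef, Fintype.card_eq_zero]
          · exact mul_nonneg (by positivity) (sub_nonneg.2 (hE z hne.some))
        have hg' : ∀ w : Fin n, 0 ≤ g' w := by
          intro w
          rcases isEmpty_or_nonempty (H w x) with he | hne
          · simp [hg'def, Fintype.card_eq_zero]
          · exact mul_nonneg (by positivity) (sub_nonneg.2 (hF w hne.some))
        have hsum1 : ∑ z, g z =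
            (∑ z : Fin n, (Fintype.card (H x z) : ℤ) * d ((z : ℕ) + (r' + 1) * n)) -
            (∑ z : Fin n, (Fintype.card (H x z) : ℤ)) * D := by
          simp [hgdef, mul_sub, Finset.sum_sub_distrib, Finset.sum_mul]
        have hsum2 : ∑ w, g' w =
            (∑ w : Fin n, (Fintype.card (H w x) : ℤ) * d ((w : ℕ) + r' * n)) -
            (∑ w : Fin n, (Fintype.card (H w x) : ℤ)) * D := by
          simp [hg'def, mul_sub, Finset.sum_sub_distrib, Finset.sum_mul]
        have hgsum : 0 ≤ ∑ z, g z := Finset.sum_nonneg fun z _ => hg z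
        have hg'sum : 0 ≤ ∑ w, g' w := Finset.sum_nonneg fun w _ => hg' w
        have hS : (2 : ℤ) ≤ (∑ z : Fin n, (Fintype.card (H x z) : ℤ)) +
            (∑ w : Fin n, (Fintype.card (H w x) : ℤ)) := by
          have hbx := hb x
          have h2le : 2 ≤ ∑ z : Fin n, (Fintype.card (H x z) + Fintype.card (H z x)) := hbx
          calc (2 : ℤ) ≤ ((∑ z : Fin n, (Fintype.card (H x z) + Fintype.card (H z x)) : ℕ) : ℤ) := by
                exact_mod_cast h2le
            _ = _ := by push_cast [Finset.sum_add_distrib]; ring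
        set S1 := ∑ z : Fin n, (Fintype.card (H x z) : ℤ) with hS1
        set S2 := ∑ w : Fin n, (Fintype.card (H w x) : ℤ) with hS2
        have hdm : d ((x : ℕ) + (r' + 1) * n) = (∑ z, g z) + (∑ w, g' w) + (S1 + S2 - 1) * D := by
          rw [hrec, hsum1, hsum2]; ring
        have hmul1 : 0 ≤ (S1 + S2 - 1) * D := mul_nonneg (by linarith) hD0
        have hmul2 : 0 ≤ (S1 + S2 - 2) * D := mul_nonneg (by linarith) hD0
        refine ⟨by linarith, ?_, ?_⟩
        · intro z hz
          have hc : (1 : ℤ) ≤ (Fintype.card (H x z) : ℤ) := by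
            have : 0 < Fintype.card (H x z) := @Fintype.card_pos _ _ ⟨hz⟩
            exact_mod_cast this
          have hEz : D ≤ d ((z : ℕ) + (r' + 1) * n) := hE z hz
          have hsingle : g z ≤ ∑ u, g u :=
            Finset.single_le_sum (fun u _ => hg u) (Finset.mem_univ z)
          have hgz : d ((z : ℕ) + (r' + 1) * n) - D ≤ g z :=
            le_mul_of_one_le_left (sub_nonneg.2 hEz) hc
          linarith
        · intro r'' hr'' w hw
          have hr'eq : r'' = r' := by omega
          subst hr'eq
          have hc : (1 : ℤ) ≤ (Fintype.card (H w x) : ℤ) := by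
            have : 0 < Fintype.card (H w x) := @Fintype.card_pos _ _ ⟨hw⟩
            exact_mod_cast this
          have hFw := hF w hw
          have hsingle : g' w ≤ ∑ u, g' u :=
            Finset.single_le_sum (fun u _ => hg' u) (Finset.mem_univ w)
          have hgw : _ - D ≤ g' w := le_mul_of_one_le_left (sub_nonneg.2 hFw) hc
          linarith
  exact ⟨(key _ x r rfl).2.1 y γ, (key _ y (r + 1) rfl).2.2 r rfl x γ⟩
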